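/- For B ⊆ T ⊆ [n] with |T| = t and |B| = k, the family G_B = {A ⊆ [n] : A ∩ T = B} has Lubell mass ℓ(G_B) = (1/C(t,k))·((n+1)/(t+1)). -/

import Mathlib

open Finset

private lemma ptw_recip (n m : ℕ) (hm : m ≤ n) :
    (1:ℝ)/((n+1).choose m) + 1/((n+1).choose (m+1))
      = ((n:ℝ)+2)/(((n:ℝ)+1) * (n.choose m)) := by
  have hA : (0:ℝ) < ((n+1).choose m : ℝ) := by
    exact_mod_cast Nat.choose_pos (by omega)
  have hB : (0:ℝ) < ((n+1).choose (m+1) : ℝ) := by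
    exact_mod_cast Nat.choose_pos (by omega)
  have hC : (0:ℝ) < (n.choose m : ℝ) := by exact_mod_cast Nat.choose_pos hm
  have h1 : ((n:ℝ)+1) * (n.choose m) = ((n+1).choose (m+1) : ℝ) * ((m:ℝ)+1) := by
    exact_mod_cast Nat.add_one_mul_choose_eq n m
  have h2 : ((n:ℝ)+2) * ((n+1).choose m) = ((n+2).choose (m+1) : ℝ) * ((m:ℝ)+1) := by
    exact_mod_cast Nat.add_one_mul_choose_eq (n+1) m
  have h3 : ((n+2).choose (m+1) : ℝ) = ((n+1).choose m : ℝ) + ((n+1).choose (m+1)) := by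
    exact_mod_cast Nat.choose_succ_succ (n+1) m
  rw [h3] at h2
  have hn1 : ((n:ℝ)+1) ≠ 0 := by positivity
  field_simp
  nlinarith [h1, h2, hA, hB, hC]

private lemma pascal_sum (d : ℕ) (a : ℕ → ℝ) :
    ∑ j ∈ Finset.range (d+2), ((d+1).choose j : ℝ) * a j
      = ∑ j ∈ Finset.range (d+1), (d.choose j : ℝ) * (a j + a (j+1)) := by
  have h1 : ∑ j ∈ Finset.range (d+2), ((d+1).choose j : ℝ) * a j
      = (∑ i ∈ Finset.range (d+1), (d.choose i : ℝ) * a (i+1))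
        + (∑ i ∈ Finset.range (d+1), (d.choose (i+1) : ℝ) * a (i+1)) + a 0 := by
    rw [Finset.sum_range_succ']
    simp [Nat.choose_succ_succ, add_mul, Finset.sum_add_distrib]
  have h2 : ∑ i ∈ Finset.range (d+1), (d.choose (i+1) : ℝ) * a (i+1)
      = (∑ j ∈ Finset.range (d+1), (d.choose j : ℝ) * a j) - a 0 := by
    rw [Finset.sum_range_succ, Finset.sum_range_succ' (fun j => (d.choose j : ℝ) * a j)]
    simp [Nat.choose_succ_self]
  rw [h1, h2]
  simp only [mul_add, Finset.sum_add_distrib]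
  ring

private lemma key_sum (t k : ℕ) (hkt : k ≤ t) :
    ∀ n, t ≤ n →
      ∑ j ∈ Finset.range (n - t + 1), ((n-t).choose j : ℝ) / (n.choose (k+j))
        = ((n:ℝ)+1)/(((t:ℝ)+1) * (t.choose k)) := by
  intro n hn
  induction n, hn using Nat.le_induction with
  | base =>
      have hC : (0:ℝ) < (t.choose k : ℝ) := by exact_mod_cast Nat.choose_pos hkt
      have ht1 : ((t:ℝ)+1) ≠ 0 := by positivity
      simp [Nat.sub_self]
      field_simp
  | succ n hn ih =>
      have hd : n + 1 - t = (n - t) + 1 := by omega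
      rw [hd]
      set d := n - t with hdd
      have hdiv : ∑ j ∈ Finset.range (d+1+1), ((d+1).choose j : ℝ) / ((n+1).choose (k+j))
          = ∑ j ∈ Finset.range (d+2), ((d+1).choose j : ℝ)
              * ((fun j => (1:ℝ)/((n+1).choose (k+j))) j) := by
        refine Finset.sum_congr rfl fun j _ => ?_
        exact (mul_one_div _ _).symm
      rw [hdiv, pascal_sum d (fun j => (1:ℝ)/((n+1).choose (k+j)))]
      have step : ∑ j ∈ Finset.range (d+1), (d.choose j:ℝ)
            * ((1:ℝ)/((n+1).choose (k+j)) + (1:ℝ)/((n+1).choose (k+(j+1))))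
          = ((n:ℝ)+2)/((n:ℝ)+1)
            * ∑ j ∈ Finset.range (d+1), (d.choose j : ℝ) / (n.choose (k+j)) := by
        rw [Finset.mul_sum]
        refine Finset.sum_congr rfl fun j hj => ?_
        have hjn : k + j ≤ n := by
          have := Finset.mem_range.mp hj; omega
        have : k + (j+1) = (k+j) + 1 := by omega
        rw [this, ptw_recip n (k+j) hjn]
        have hCp : ((n.choose (k+j)):ℝ) ≠ 0 := by
          exact_mod_cast (Nat.choose_pos hjn).ne'
        have hn1 : ((n:ℝ)+1) ≠ 0 := by positivity
        field_simp
      rw [step, ih]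
      have hn1 : ((n:ℝ)+1) ≠ 0 := by positivity
      have hC : (0:ℝ) < (t.choose k : ℝ) := by exact_mod_cast Nat.choose_pos hkt
      have ht1 : ((t:ℝ)+1) ≠ 0 := by positivity
      push_cast
      field_simp
      ring

/-- For `B ⊆ T ⊆ [n]` with `|T| = t` and `|B| = k`, the family
`G_B = {A ⊆ [n] : A ∩ T = B}` has Lubell mass `(1/C(t,k))·((n+1)/(t+1))`. -/
theorem lubell_of_trace_class (n t k : ℕ) (T B : Finset (Fin n))
    (hBT : B ⊆ T) (ht : T.card = t) (hk : B.card = k) :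
    (∑ A ∈ (Finset.univ : Finset (Finset (Fin n))).filter (fun A => A ∩ T = B),
        (1 : ℝ) / (n.choose A.card))
      = (1 / (t.choose k : ℝ)) * (((n : ℝ) + 1) / ((t : ℝ) + 1)) := by
  have hkt : k ≤ t := by
    subst ht hk; exact card_le_card hBT
  have htn : t ≤ n := by
    subst ht; simpa using T.card_le_univ
  have hsum : (∑ A ∈ (Finset.univ : Finset (Finset (Fin n))).filter (fun A => A ∩ T = B),
        (1 : ℝ) / (n.choose A.card))
      = ∑ S ∈ Tᶜ.powerset, (1:ℝ)/(n.choose (k + S.card)) := by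
    refine Finset.sum_nbij' (fun A => A \ T) (fun S => S ∪ B) ?_ ?_ ?_ ?_ ?_
    · intro A hA
      rw [Finset.mem_powerset]
      intro x hx
      simp only [Finset.mem_sdiff] at hx
      simp [Finset.mem_compl, hx.2]
    · intro S hS
      rw [Finset.mem_powerset] at hS
      simp only [Finset.mem_filter, Finset.mem_univ, true_and]
      ext x
      simp only [Finset.mem_inter, Finset.mem_union]
      constructor
      · rintro ⟨hx1 | hx1, hx2⟩
        · exact absurd hx2 (by simpa [Finset.mem_compl] using hS hx1)
        · exact hx1
      · intro hx; exact ⟨Or.inr hx, hBT hx⟩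
    · intro A hA
      simp only [Finset.mem_filter, Finset.mem_univ, true_and] at hA
      ext x
      simp only [Finset.mem_union, Finset.mem_sdiff]
      constructor
      · rintro (⟨h1, _⟩ | h1)
        · exact h1
        · have : x ∈ A ∩ T := hA ▸ h1
          exact (Finset.mem_inter.mp this).1
      · intro hx
        by_cases hxT : x ∈ T
        · exact Or.inr (hA ▸ Finset.mem_inter.mpr ⟨hx, hxT⟩)
        · exact Or.inl ⟨hx, hxT⟩
    · intro S hS
      rw [Finset.mem_powerset] at hS
      ext x
      simp only [Finset.mem_sdiff, Finset.mem_union]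
      constructor
      · rintro ⟨hx1 | hx1, hx2⟩
        · exact hx1
        · exact absurd (hBT hx1) hx2
      · intro hx
        exact ⟨Or.inl hx, by simpa [Finset.mem_compl] using hS hx⟩
    · intro A hA
      simp only [Finset.mem_filter, Finset.mem_univ, true_and] at hA
      have hcard : A.card = k + (A \ T).card := by
        have := Finset.card_inter_add_card_sdiff A T
        rw [hA, hk] at this
        omega
      rw [hcard]
  rw [hsum, Finset.sum_powerset_apply_card (fun m => (1:ℝ)/(n.choose (k + m)))]
  have hTc : Tᶜ.card = n - t := by
    simp [Finset.card_compl, ht]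
  rw [hTc]
  have := key_sum t k hkt n htn
  have heq : ∑ m ∈ Finset.range (n - t + 1), (n - t).choose m • ((1:ℝ)/(n.choose (k + m)))
      = ∑ j ∈ Finset.range (n - t + 1), ((n-t).choose j : ℝ) / (n.choose (k+j)) := by
    refine Finset.sum_congr rfl fun j _ => ?_
    rw [nsmul_eq_mul, mul_one_div]
  rw [heq, this]
  have hC : (0:ℝ) < (t.choose k : ℝ) := by exact_mod_cast Nat.choose_pos hkt
  have ht1 : ((t:ℝ)+1) ≠ 0 := by positivity
  rw [div_mul_eq_mul_div, one_mul, div_div, mul_comm]
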